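/- Let G be a finite group, K₁,...,Kₙ conjugacy classes with Kᵢ = xᵢ^G, and D = d^G a conjugacy class. Then K₁K₂⋯Kₙ = D if and only if χ(x₁)⋯χ(xₙ) = χ(1)^{n-1} χ(d) for all irreducible characters χ of G. -/

import Mathlib

open Pointwise CategoryTheory

/-- The conjugacy class of `a` in `G`. -/
def conjClass (G : Type*) [Group G] (a : G) : Set G := {b | IsConj a b}

namespace ClassProdAux

open MonoidAlgebra Representation Module

open scoped Classical

variable {G : Type} [Group G] [Fintype G]

noncomputable def cs (S : Set G) : MonoidAlgebra ℂ G :=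
  ∑ g ∈ S.toFinite.toFinset, MonoidAlgebra.single g (1 : ℂ)

lemma cs_apply (S : Set G) (g : G) : (cs S).coeff g = if g ∈ S then 1 else 0 := by
  rw [cs, MonoidAlgebra.coeff_sum, Finset.sum_apply']
  simp only [MonoidAlgebra.coeff_single, Finsupp.single_apply]
  rw [Finset.sum_ite_eq' (Set.Finite.toFinset _) g (fun _ => (1 : ℂ))]
  simp [Set.Finite.mem_toFinset]

lemma conj_mem_conjClass {x a : G} (h : G) (ha : a ∈ conjClass G x) :
    h * a * h⁻¹ ∈ conjClass G x :=
  ha.trans (isConj_iff.mpr ⟨h, rfl⟩)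

lemma single_comm_cs (h x : G) :
    MonoidAlgebra.single h (1 : ℂ) * cs (conjClass G x) =
      cs (conjClass G x) * MonoidAlgebra.single h 1 := by
  refine MonoidAlgebra.coeff_injective (Finsupp.ext fun g => ?_)
  rw [MonoidAlgebra.coeff_single_mul_apply, MonoidAlgebra.coeff_mul_single_apply, cs_apply, cs_apply]
  have hiff : (h⁻¹ * g ∈ conjClass G x) ↔ (g * h⁻¹ ∈ conjClass G x) := by
    constructor
    · intro hm
      have := conj_mem_conjClass h hm
      rwa [show h * (h⁻¹ * g) * h⁻¹ = g * h⁻¹ by group] at this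
    · intro hm
      have := conj_mem_conjClass h⁻¹ hm
      rwa [show h⁻¹ * (g * h⁻¹) * h⁻¹⁻¹ = h⁻¹ * g by group] at this
  simp [hiff]

lemma single_comm_prod (L : List (Set G))
    (hL : ∀ S ∈ L, ∃ x, S = conjClass G x) (h : G) :
    MonoidAlgebra.single h (1 : ℂ) * (L.map cs).prod =
      (L.map cs).prod * MonoidAlgebra.single h 1 := by
  induction L with
  | nil => simp
  | cons S L ih =>
      obtain ⟨y, rfl⟩ := hL S List.mem_cons_self
      have hL' : ∀ T ∈ L, ∃ x, T = conjClass G x := fun T hT => hL T (List.mem_cons_of_mem _ hT)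
      simp only [List.map_cons, List.prod_cons]
      rw [← mul_assoc, single_comm_cs, mul_assoc, ih hL', ← mul_assoc]

lemma conj_apply_eq {z : MonoidAlgebra ℂ G}
    (hz : ∀ h : G, MonoidAlgebra.single h (1 : ℂ) * z = z * MonoidAlgebra.single h 1)
    (h g : G) : z.coeff (h * g * h⁻¹) = z.coeff g := by
  have h1 : (MonoidAlgebra.single h (1:ℂ) * z).coeff (h * g) = (z * MonoidAlgebra.single h (1:ℂ)).coeff (h * g) := by
    rw [hz h]
  rw [MonoidAlgebra.coeff_single_mul_apply, MonoidAlgebra.coeff_mul_single_apply, one_mul, mul_one,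
    inv_mul_cancel_left] at h1
  exact h1.symm

lemma exists_count (L : List (Set G)) :
    ∃ N : G → ℕ, (∀ g, (L.map cs).prod.coeff g = (N g : ℂ)) ∧ ∀ g, N g ≠ 0 ↔ g ∈ L.prod := by
  induction L with
  | nil =>
      refine ⟨fun g => if g = 1 then 1 else 0, fun g => ?_, fun g => ?_⟩
      · simp only [List.map_nil, List.prod_nil, MonoidAlgebra.one_def,
          MonoidAlgebra.coeff_single, Finsupp.single_apply]
        split_ifs with h1 h2 h2 <;> simp_all <;> tauto
      · simp only [List.prod_nil, Set.mem_one]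
        split_ifs with h1 <;> simp [h1]
  | cons K L ih =>
      obtain ⟨N, hN, hN'⟩ := ih
      refine ⟨fun g => ∑ a ∈ K.toFinite.toFinset, N (a⁻¹ * g), fun g => ?_, fun g => ?_⟩
      · rw [List.map_cons, List.prod_cons, cs, Finset.sum_mul, MonoidAlgebra.coeff_sum, Finset.sum_apply']
        simp only [MonoidAlgebra.coeff_single_mul_apply, one_mul, hN]
        rw [Nat.cast_sum]
      · rw [List.prod_cons]
        constructor
        · intro hne
          obtain ⟨a, ha, hna⟩ : ∃ a ∈ K.toFinite.toFinset, N (a⁻¹ * g) ≠ 0 := by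
            by_contra hc
            push_neg at hc
            exact hne (Finset.sum_eq_zero fun a ha => hc a ha)
          exact Set.mem_mul.mpr ⟨a, (Set.Finite.mem_toFinset _).mp ha, a⁻¹ * g,
            (hN' _).mp hna, by group⟩
        · intro hg h0
          obtain ⟨a, ha, b, hb, rfl⟩ := Set.mem_mul.mp hg
          rw [Finset.sum_eq_zero_iff] at h0
          have := h0 a ((Set.Finite.mem_toFinset _).mpr ha)
          rw [inv_mul_cancel_left] at this
          exact (hN' b).mpr hb this

noncomputable def eps : MonoidAlgebra ℂ G →ₐ[ℂ] ℂ := MonoidAlgebra.lift ℂ ℂ G 1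

lemma eps_cs (S : Set G) : eps (cs S) = (S.toFinite.toFinset.card : ℂ) := by
  rw [cs, map_sum]
  simp [eps, MonoidAlgebra.lift_single]

lemma card_conjClass_ne_zero (x : G) :
    ((conjClass G x).toFinite.toFinset.card : ℂ) ≠ 0 := by
  have hx : x ∈ (conjClass G x).toFinite.toFinset :=
    (Set.Finite.mem_toFinset _).mpr (IsConj.refl x)
  exact Nat.cast_ne_zero.mpr (Finset.card_ne_zero_of_mem hx)


lemma schur_scalar (V : FDRep ℂ G) (hV : Simple V) (T : V →ₗ[ℂ] V)
    (hT : ∀ g : G, T ∘ₗ V.ρ g = V.ρ g ∘ₗ T) : ∃ c : ℂ, T = c • LinearMap.id := by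
  haveI := hV
  let f : V ⟶ V := ⟨ConcreteCategory.ofHom T, fun g => by ext v; exact LinearMap.congr_fun (hT g) v⟩
  have h1 : finrank ℂ (V ⟶ V) = 1 := by
    rw [FDRep.finrank_hom_simple_simple V V, if_pos ⟨Iso.refl V⟩]
  obtain ⟨c, hc⟩ := (finrank_eq_one_iff_of_nonzero' (𝟙 V) (id_nonzero V)).mp h1 f
  refine ⟨c, ?_⟩
  have h2 := congrArg Action.Hom.hom hc
  rw [Action.smul_hom] at h2
  exact congrArg (fun φ => φ.hom.hom) h2.symm

lemma char_one_ne_zero (V : FDRep ℂ G) (hV : Simple V) : V.character 1 ≠ 0 := by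
  haveI := hV
  rw [FDRep.char_one]
  refine Nat.cast_ne_zero.mpr fun h0 => ?_
  haveI : Subsingleton V := Module.finrank_zero_iff.mp h0
  exact id_nonzero V (Action.Hom.ext (FGModuleCat.hom_ext <| LinearMap.ext fun v => Subsingleton.elim (α := V) _ _))



lemma trace_asAlgebraHom_cs (V : FDRep ℂ G) (x : G) :
    LinearMap.trace ℂ V (asAlgebraHom V.ρ (cs (conjClass G x))) =
      ((conjClass G x).toFinite.toFinset.card : ℂ) * V.character x := by
  rw [cs, map_sum, map_sum]
  have key : ∀ a ∈ (conjClass G x).toFinite.toFinset,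
      LinearMap.trace ℂ V (asAlgebraHom V.ρ (MonoidAlgebra.single a 1)) = V.character x := by
    intro a ha
    rw [asAlgebraHom_single, one_smul]
    have hmem : a ∈ conjClass G x := (Set.Finite.mem_toFinset _).mp ha
    have hconj : IsConj x a := hmem
    obtain ⟨c, rfl⟩ := isConj_iff.mp hconj
    exact FDRep.char_conj V x c
  rw [Finset.sum_congr rfl key, Finset.sum_const, nsmul_eq_mul]

lemma cs_scalar (V : FDRep ℂ G) (hV : Simple V) (x : G) :
    asAlgebraHom V.ρ (cs (conjClass G x)) =
      algebraMap ℂ (Module.End ℂ V)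
        (((conjClass G x).toFinite.toFinset.card : ℂ) * V.character x / V.character 1) := by
  haveI := hV
  have hcomm : ∀ g : G, (asAlgebraHom V.ρ (cs (conjClass G x))) ∘ₗ V.ρ g
      = V.ρ g ∘ₗ (asAlgebraHom V.ρ (cs (conjClass G x))) := by
    intro g
    rw [← asAlgebraHom_single_one V.ρ g, ← Module.End.mul_eq_comp, ← Module.End.mul_eq_comp,
      ← map_mul, ← map_mul, single_comm_cs]
  obtain ⟨c, hc⟩ := schur_scalar V hV _ hcomm
  have htr := congrArg (LinearMap.trace ℂ V) hc
  rw [trace_asAlgebraHom_cs, map_smul, LinearMap.trace_id, smul_eq_mul] at htr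
  have hone : V.character 1 = (finrank ℂ V : ℂ) := FDRep.char_one V
  rw [hc, Module.algebraMap_end_eq_smul_id]
  congr 1
  rw [eq_div_iff (char_one_ne_zero V hV), hone]
  exact htr.symm

lemma algebraMap_inj (V : FDRep ℂ G) (hV : Simple V) (a b : ℂ)
    (hab : algebraMap ℂ (Module.End ℂ V) a = algebraMap ℂ (Module.End ℂ V) b) : a = b := by
  have htr := congrArg (LinearMap.trace ℂ V) hab
  rw [Module.algebraMap_end_eq_smul_id, Module.algebraMap_end_eq_smul_id, map_smul, map_smul,
    LinearMap.trace_id, smul_eq_mul, smul_eq_mul] at htr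
  have hone := char_one_ne_zero V hV
  rw [FDRep.char_one] at hone
  exact mul_right_cancel₀ hone htr


noncomputable def resRep (W : FDRep ℂ G) (p : Submodule ℂ W)
    (hp : ∀ (g : G), ∀ v ∈ p, W.ρ g v ∈ p) : Representation ℂ G p where
  toFun g := (W.ρ g).restrict (hp g)
  map_one' := by
    refine LinearMap.ext fun v => Subtype.ext ?_
    simp [LinearMap.restrict_apply]
  map_mul' g h := by
    refine LinearMap.ext fun v => Subtype.ext ?_
    simp [LinearMap.restrict_apply]

noncomputable def subInclusion (W : FDRep ℂ G) (p : Submodule ℂ W)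
    (hp : ∀ (g : G), ∀ v ∈ p, W.ρ g v ∈ p) : FDRep.of (resRep W p hp) ⟶ W where
  hom := ConcreteCategory.ofHom p.subtype
  comm g := rfl

lemma simple_of_invariant (V : FDRep ℂ G) (hnt : Nontrivial V)
    (h : ∀ p : Submodule ℂ V, (∀ (g : G), ∀ v ∈ p, V.ρ g v ∈ p) → p = ⊥ ∨ p = ⊤) :
    Simple V := by
  constructor
  intro Y f hmono
  constructor
  · intro hiso h0
    obtain ⟨a, b, hab⟩ := hnt
    have hid : 𝟙 V = (0 : V ⟶ V) := by
      calc 𝟙 V = inv f ≫ f := (IsIso.inv_hom_id f).symm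
      _ = inv f ≫ 0 := congrArg (fun t => inv f ≫ t) h0
      _ = 0 := Limits.comp_zero
    have key : ∀ v : V, v = 0 := by
      intro v
      have h2 : Action.Hom.hom (𝟙 V) v = Action.Hom.hom (0 : V ⟶ V) v := by rw [hid]
      simpa [Action.zero_hom] using h2.trans (rfl : _ = (0 : V))
    exact hab ((key a).trans (key b).symm)
  · intro hf0
    have hcm : ∀ (g : G) (w : Y), f.hom.hom.hom (Y.ρ g w) = V.ρ g (f.hom.hom.hom w) := by
      intro g w
      exact congrFun (congrArg (fun (l : Y.V ⟶ V.V) => (l : Y → V)) (f.comm g)) w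
    have hker : ∀ (g : G), ∀ v ∈ LinearMap.ker f.hom.hom.hom, Y.ρ g v ∈ LinearMap.ker f.hom.hom.hom := by
      intro g v hv
      rw [LinearMap.mem_ker] at hv ⊢
      exact (hcm g v).trans (by rw [hv, map_zero])
    have hinj : Function.Injective f.hom.hom.hom := by
      rw [← LinearMap.ker_eq_bot]
      by_contra hK
      have hg0 : subInclusion Y _ hker ≫ f = 0 := by
        apply Action.Hom.ext
        apply FGModuleCat.hom_ext
        refine LinearMap.ext fun v => ?_
        exact v.2
      have hz : subInclusion Y _ hker = 0 := by
        have := (cancel_mono f).mp (by rw [hg0, Limits.zero_comp] :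
          subInclusion Y _ hker ≫ f = 0 ≫ f)
        exact this
      apply hK
      ext v
      simp only [Submodule.mem_bot]
      constructor
      · intro hv
        have h3 := congrArg Action.Hom.hom hz
        have h4 := congrFun (congrArg (fun (l : _ ⟶ Y.V) => (l : _ → Y)) h3) ⟨v, hv⟩
        simpa [Action.zero_hom, subInclusion] using h4.trans (rfl : _ = (0 : Y))
      · rintro rfl
        exact (LinearMap.ker f.hom.hom.hom).zero_mem
    have hrg : ∀ (g : G), ∀ v ∈ LinearMap.range f.hom.hom.hom, V.ρ g v ∈ LinearMap.range f.hom.hom.hom := by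
      rintro g v ⟨w, rfl⟩
      exact ⟨Y.ρ g w, hcm g w⟩
    rcases h (LinearMap.range f.hom.hom.hom) hrg with hbot | htop
    · exfalso
      apply hf0
      apply Action.Hom.ext
      apply FGModuleCat.hom_ext
      exact LinearMap.range_eq_bot.mp hbot
    · have hbij : Function.Bijective f.hom.hom.hom := ⟨hinj, LinearMap.range_eq_top.mp htop⟩
      let e := LinearEquiv.ofBijective f.hom.hom.hom hbij
      have h2 : ∀ w, f.hom.hom.hom (e.symm w) = w := fun w => e.apply_symm_apply w
      have hinv : ∀ g : G, e.symm.toLinearMap ∘ₗ V.ρ g = Y.ρ g ∘ₗ e.symm.toLinearMap := by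
        intro g
        refine LinearMap.ext fun v => hinj ?_
        show f.hom.hom.hom (e.symm (V.ρ g v)) = f.hom.hom.hom (Y.ρ g (e.symm v))
        rw [h2, hcm g (e.symm v), h2]
      refine ⟨⟨⟨ConcreteCategory.ofHom e.symm.toLinearMap, fun g => by ext v; exact LinearMap.congr_fun (hinv g) v⟩, ?_, ?_⟩⟩
      · apply Action.Hom.ext
        apply FGModuleCat.hom_ext
        refine LinearMap.ext fun w => ?_
        exact e.symm_apply_apply w
      · apply Action.Hom.ext
        apply FGModuleCat.hom_ext
        refine LinearMap.ext fun v => ?_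
        exact e.apply_symm_apply v


noncomputable def sRep (S : Submodule (MonoidAlgebra ℂ G) (MonoidAlgebra ℂ G)) :
    Representation ℂ G S where
  toFun g :=
    { toFun := fun s => ⟨MonoidAlgebra.single g 1 * (s : MonoidAlgebra ℂ G),
        by simpa [smul_eq_mul] using S.smul_mem (MonoidAlgebra.single g 1) s.2⟩
      map_add' := fun s t => by
        refine Subtype.ext ?_
        simp [mul_add]
      map_smul' := fun c s => by
        refine Subtype.ext ?_
        simp [mul_smul_comm] }
  map_one' := by
    refine LinearMap.ext fun s => Subtype.ext ?_
    show MonoidAlgebra.single (1 : G) (1 : ℂ) * (s : MonoidAlgebra ℂ G)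
        = ((1 : Module.End ℂ S) s : MonoidAlgebra ℂ G)
    rw [← MonoidAlgebra.one_def, one_mul, Module.End.one_apply]
  map_mul' g h := by
    refine LinearMap.ext fun s => Subtype.ext ?_
    show MonoidAlgebra.single (g * h) (1 : ℂ) * (s : MonoidAlgebra ℂ G)
        = MonoidAlgebra.single g (1 : ℂ) * (MonoidAlgebra.single h (1 : ℂ) * (s : MonoidAlgebra ℂ G))
    rw [← mul_assoc, MonoidAlgebra.single_mul_single, one_mul]

lemma sRep_asAlgebraHom (S : Submodule (MonoidAlgebra ℂ G) (MonoidAlgebra ℂ G))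
    (a : MonoidAlgebra ℂ G) (s : S) :
    ((asAlgebraHom (sRep S) a s : S) : MonoidAlgebra ℂ G) = a * (s : MonoidAlgebra ℂ G) := by
  induction a using MonoidAlgebra.induction_on with
  | of g => rw [asAlgebraHom_of]; rfl
  | add f g hf hg => rw [map_add, LinearMap.add_apply, Submodule.coe_add, hf, hg, add_mul]
  | smul r f hf => rw [map_smul, LinearMap.smul_apply,
      Submodule.coe_smul_of_tower, hf, smul_mul_assoc]

lemma completeness (z : MonoidAlgebra ℂ G)
    (hz : ∀ V : FDRep ℂ G, Simple V → asAlgebraHom V.ρ z = 0) : z = 0 := by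
  haveI : NeZero ((Fintype.card G : ℂ)) := ⟨Nat.cast_ne_zero.mpr Fintype.card_ne_zero⟩
  haveI : FiniteDimensional ℂ (MonoidAlgebra ℂ G) :=
    Module.Finite.equiv ((Finsupp.linearEquivFunOnFinite ℂ ℂ G).symm.trans (MonoidAlgebra.coeffLinearEquiv ℂ).symm)
  have key : ∀ S : Submodule (MonoidAlgebra ℂ G) (MonoidAlgebra ℂ G),
      IsSimpleModule (MonoidAlgebra ℂ G) S → ∀ s ∈ S, z * s = 0 := by
    intro S hS s hs
    haveI := hS
    haveI : FiniteDimensional ℂ S := FiniteDimensional.of_injective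
      ({ toFun := fun s => (s : MonoidAlgebra ℂ G)
         map_add' := fun a b => rfl
         map_smul' := fun c a => rfl } : S →ₗ[ℂ] MonoidAlgebra ℂ G) Subtype.coe_injective
    have hnt : Nontrivial S := by
      by_contra hc
      rw [not_nontrivial_iff_subsingleton] at hc
      refine (bot_ne_top : (⊥ : Submodule (MonoidAlgebra ℂ G) S) ≠ ⊤) ?_
      ext v
      simp only [Submodule.mem_bot, Submodule.mem_top, iff_true]
      exact Subsingleton.elim v 0
    have hsimple : Simple (FDRep.of (sRep S)) := by
      apply simple_of_invariant _ hnt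
      intro p0 hp
      let p : Submodule ℂ S := p0
      have hp : ∀ (g : G), ∀ v ∈ p, sRep S g v ∈ p := hp
      let q : Submodule (MonoidAlgebra ℂ G) S :=
        { carrier := p
          add_mem' := fun {a b} ha hb => p.add_mem ha hb
          zero_mem' := p.zero_mem
          smul_mem' := by
            intro a t ht
            have h1 : a • t = asAlgebraHom (sRep S) a t := by
              refine Subtype.ext ?_
              rw [sRep_asAlgebraHom]
              rfl
            rw [h1, asAlgebraHom_def, MonoidAlgebra.lift_apply, Finsupp.sum, LinearMap.sum_apply]
            refine Submodule.sum_mem p fun g hg => ?_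
            rw [LinearMap.smul_apply]
            exact p.smul_mem _ (hp g t ht) }
      rcases eq_bot_or_eq_top q with hq | hq
      · left
        show p = ⊥
        ext v
        rw [Submodule.mem_bot]
        constructor
        · intro hv
          have h2 : v ∈ q := hv
          rw [hq, Submodule.mem_bot] at h2
          exact h2
        · rintro rfl
          exact p.zero_mem
      · right
        show p = ⊤
        ext v
        simp only [Submodule.mem_top, iff_true]
        have h2 : v ∈ q := by rw [hq]; trivial
        exact h2
    have h0 := hz (FDRep.of (sRep S)) hsimple
    have h2 := sRep_asAlgebraHom S z ⟨s, hs⟩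
    rw [show asAlgebraHom (sRep S) z = 0 from h0] at h2
    simpa using h2.symm
  have h1 : (1 : MonoidAlgebra ℂ G) ∈ (⊤ : Submodule (MonoidAlgebra ℂ G) (MonoidAlgebra ℂ G)) :=
    trivial
  rw [← IsSemisimpleModule.sSup_simples_eq_top (MonoidAlgebra ℂ G) (MonoidAlgebra ℂ G),
    sSup_eq_iSup'] at h1
  have h2 : z * 1 = 0 := by
    refine Submodule.iSup_induction _ (motive := fun a => z * a = 0) h1 ?_ (mul_zero z) ?_
    · rintro ⟨S, hS⟩ a ha
      exact key S hS a ha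
    · intro a b ha hb
      rw [mul_add, ha, hb, add_zero]
  simpa using h2


end ClassProdAux

open ClassProdAux MonoidAlgebra Representation Module in
theorem stmt1 {G : Type} [Group G] [Fintype G] (n : ℕ) (hn : 2 ≤ n)
    (x : Fin n → G) (d : G) :
    (List.ofFn fun i => conjClass G (x i)).prod = conjClass G d ↔
      ∀ (V : FDRep ℂ G), Simple V →
        (∏ i, V.character (x i)) = V.character 1 ^ (n - 1) * V.character d := by
  obtain ⟨m, rfl⟩ : ∃ m, n = m + 1 := ⟨n - 1, by omega⟩
  have hm1 : (m + 1) - 1 = m := rfl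
  set L : List (Set G) := List.ofFn fun i => conjClass G (x i) with hL
  have hLcc : ∀ S ∈ L, ∃ y, S = conjClass G y := by
    intro S hS
    obtain ⟨i, hi⟩ := List.mem_ofFn.mp hS
    exact ⟨x i, hi.symm⟩
  set P : MonoidAlgebra ℂ G := (L.map cs).prod with hP
  obtain ⟨N, hN, hN'⟩ := exists_count L
  set k : Fin (m + 1) → ℂ := fun i => ((conjClass G (x i)).toFinite.toFinset.card : ℂ) with hk
  set kD : ℂ := ((conjClass G d).toFinite.toFinset.card : ℂ) with hkD
  have hkD0 : kD ≠ 0 := card_conjClass_ne_zero d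
  have hkprod : (∏ i, k i) ≠ 0 :=
    Finset.prod_ne_zero_iff.mpr fun i _ => card_conjClass_ne_zero (x i)
  have hπ : ∀ V : FDRep ℂ G, Simple V →
      asAlgebraHom V.ρ P =
        algebraMap ℂ (Module.End ℂ V) (∏ i, k i * V.character (x i) / V.character 1) := by
    intro V hV
    have e1 : (L.map cs).map (asAlgebraHom V.ρ)
        = List.map (algebraMap ℂ (Module.End ℂ V))
            (List.ofFn fun i => k i * V.character (x i) / V.character 1) := by
      rw [hL, List.map_ofFn, List.map_ofFn, List.map_ofFn]
      congr 1
      funext i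
      exact cs_scalar V hV (x i)
    rw [hP, map_list_prod, e1, ← map_list_prod, List.prod_ofFn]
  constructor
  · intro hSet V hV
    have hχ1 := char_one_ne_zero V hV
    have hcomm := single_comm_prod L hLcc
    have hconjinv : ∀ h g : G, P.coeff (h * g * h⁻¹) = P.coeff g := fun h g => conj_apply_eq hcomm h g
    have hdD : d ∈ L.prod := by
      rw [hSet]; exact (IsConj.refl d : d ∈ conjClass G d)
    have hPd0 : P.coeff d ≠ 0 := by
      rw [hN d]
      exact_mod_cast (hN' d).mpr hdD
    have hPform : P = P.coeff d • cs (conjClass G d) := by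
      refine MonoidAlgebra.coeff_injective (Finsupp.ext fun g => ?_)
      rw [MonoidAlgebra.coeff_smul_apply, cs_apply, smul_eq_mul]
      by_cases hg : g ∈ conjClass G d
      · rw [if_pos hg, mul_one]
        obtain ⟨c0, hc0⟩ := isConj_iff.mp (hg : IsConj d g)
        rw [← hc0]
        exact hconjinv c0 d
      · rw [if_neg hg, mul_zero, hN g]
        have : N g = 0 := by
          by_contra hne
          exact hg (hSet ▸ (hN' g).mp hne)
        rw [this, Nat.cast_zero]
    -- mass identity
    have hεP' : eps P = ∏ i, k i := by
      rw [hP, map_list_prod, hL, List.map_ofFn, List.map_ofFn, List.prod_ofFn]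
      exact Finset.prod_congr rfl fun i _ => eps_cs _
    have hmass : ∏ i, k i = P.coeff d * kD := by
      rw [← hεP']
      have := congrArg eps hPform
      rw [map_smul, eps_cs, smul_eq_mul] at this
      exact this
    -- scalar identity
    have hπ2 := congrArg (asAlgebraHom V.ρ) hPform
    rw [hπ V hV, map_smul, cs_scalar V hV d, Algebra.smul_def, ← map_mul] at hπ2
    have heq := algebraMap_inj V hV _ _ hπ2
    -- heq : ∏ i, (k i * χ (x i) / χ 1) = P d * (kD * χ d / χ 1)
    have hsplit : (∏ i, k i * V.character (x i) / V.character 1)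
        = (∏ i, k i) * (∏ i, V.character (x i)) / V.character 1 ^ (m + 1) := by
      rw [Finset.prod_div_distrib, Finset.prod_mul_distrib, Finset.prod_const,
        Finset.card_univ, Fintype.card_fin]
    rw [hsplit, hmass] at heq
    -- heq : P d * kD * ∏χ / χ1^(m+1) = P d * (kD * χ d / χ 1)
    rw [hm1]
    have hPdkD : P.coeff d * kD ≠ 0 := by rw [← hmass]; exact hkprod
    apply mul_left_cancel₀ hPdkD
    calc P.coeff d * kD * ∏ i, V.character (x i)
        = P.coeff d * kD * (∏ i, V.character (x i)) / V.character 1 ^ (m + 1)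
          * V.character 1 ^ (m + 1) := by
          rw [div_mul_cancel₀ _ (pow_ne_zero _ hχ1)]
      _ = P.coeff d * (kD * V.character d / V.character 1) * V.character 1 ^ (m + 1) := by
          rw [heq]
      _ = P.coeff d * kD * (V.character 1 ^ m * V.character d) := by
          have hfr : ((finrank ℂ V : ℕ) : ℂ) ≠ 0 := by rwa [FDRep.char_one] at hχ1
          field_simp [hfr]
          ring
  · intro hChar
    have hz : P - ((∏ i, k i) / kD) • cs (conjClass G d) = 0 := by
      apply completeness
      intro V hV
      have hχ1 := char_one_ne_zero V hV
      rw [map_sub, map_smul, hπ V hV, cs_scalar V hV d, Algebra.smul_def, ← map_mul, ← map_sub]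
      have harg : (∏ i, k i * V.character (x i) / V.character 1)
          - (∏ i, k i) / kD * (kD * V.character d / V.character 1) = 0 := by
        rw [sub_eq_zero, Finset.prod_div_distrib, Finset.prod_mul_distrib, Finset.prod_const,
          Finset.card_univ, Fintype.card_fin, hChar V hV, hm1]
        have hfr : ((finrank ℂ V : ℕ) : ℂ) ≠ 0 := by rwa [FDRep.char_one] at hχ1
        field_simp [hfr]
        ring
      rw [harg, map_zero]
    have hPfinal : P = ((∏ i, k i) / kD) • cs (conjClass G d) := by rwa [sub_eq_zero] at hz
    have hm0 : (∏ i, k i) / kD ≠ 0 := div_ne_zero hkprod hkD0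
    ext g
    constructor
    · intro hg
      have hNg : N g ≠ 0 := (hN' g).mpr hg
      have hPg : P.coeff g ≠ 0 := by
        rw [hN g]
        exact_mod_cast hNg
      rw [hPfinal, MonoidAlgebra.coeff_smul_apply, cs_apply] at hPg
      by_contra hgD
      rw [if_neg hgD, smul_zero] at hPg
      exact hPg rfl
    · intro hg
      have hPg : P.coeff g ≠ 0 := by
        rw [hPfinal, MonoidAlgebra.coeff_smul_apply, cs_apply, if_pos hg, smul_eq_mul, mul_one]
        exact hm0
      rw [hN g] at hPg
      exact (hN' g).mp (by exact_mod_cast hPg)
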